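/- Let s ≤ N/2. The number of s-element subsets J of {1,...,N} such that |I ∩ J| ≥ s/2 for a fixed s-element set I is at most 2^s · C(N-s, ⌊s/2⌋), where C denotes the binomial coefficient. -/

import Mathlib

open Finset

private lemma choose_mono_right_half {n a b : ℕ} (hab : a ≤ b) (hb : b ≤ n / 2) :
    n.choose a ≤ n.choose b := by
  induction b with
  | zero => simpa [Nat.le_zero.mp hab]
  | succ b ih =>
    rcases Nat.eq_or_lt_of_le hab with rfl | h
    · exact le_rfl
    · exact (ih (Nat.lt_succ_iff.mp h) (le_trans (by omega) hb)).trans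
        (Nat.choose_le_succ_of_lt_half_left hb)

open scoped Classical in
/-- For `s ≤ N/2`, the number of `s`-element subsets `J` of `{1,…,N}` with
`|I ∩ J| ≥ s/2`, for a fixed `s`-element set `I`, is at most
`2^s · C(N-s, ⌊s/2⌋)`. -/
theorem card_large_intersection_le {N s : ℕ} (hs : 2 * s ≤ N)
    (I : Finset (Fin N)) (hI : I.card = s) :
    ((((Finset.univ : Finset (Fin N)).powersetCard s).filter
        (fun J => (s : ℝ) / 2 ≤ ((I ∩ J).card : ℝ))).card : ℝ) ≤
      2 ^ s * ((N - s).choose (s / 2) : ℝ) := by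
  set F := (((Finset.univ : Finset (Fin N)).powersetCard s).filter
      (fun J => (s : ℝ) / 2 ≤ ((I ∩ J).card : ℝ))) with hF
  have hcompl : ((Finset.univ : Finset (Fin N)) \ I).card = N - s := by
    rw [card_sdiff_of_subset (subset_univ I), hI, card_univ, Fintype.card_fin]
  have key : F.card ≤ (N - s).choose (s / 2) * I.powerset.card := by
    apply card_le_mul_card_image_of_maps_to (f := fun J => I ∩ J)
    · intro J _; simpa [mem_powerset] using inter_subset_left
    · intro A hA
      rw [mem_powerset] at hA
      have hfib : ({J ∈ F | I ∩ J = A}).card ≤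
          ((Finset.univ \ I).powersetCard (s - A.card)).card := by
        apply Finset.card_le_card_of_injOn (fun J => J \ I)
        · intro J hJ
          simp only [Finset.mem_coe, hF, mem_filter, mem_powersetCard_univ] at hJ
          obtain ⟨⟨hJcard, _⟩, hIJ⟩ := hJ
          simp only [Finset.mem_coe]
          rw [mem_powersetCard]
          refine ⟨sdiff_subset_sdiff (subset_univ J) le_rfl, ?_⟩
          have := Finset.card_inter_add_card_sdiff J I
          rw [Finset.inter_comm, hIJ, hJcard] at this
          omega
        · intro J1 h1 J2 h2 heq
          simp only [coe_filter, Set.mem_setOf_eq] at h1 h2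
          simp only at heq
          have e1 : J1 = A ∪ (J1 \ I) := by
            conv_lhs => rw [← sup_inf_sdiff J1 I]
            rw [Finset.inf_eq_inter, Finset.inter_comm, h1.2, Finset.sup_eq_union]
          have e2 : J2 = A ∪ (J2 \ I) := by
            conv_lhs => rw [← sup_inf_sdiff J2 I]
            rw [Finset.inf_eq_inter, Finset.inter_comm, h2.2, Finset.sup_eq_union]
          rw [e1, e2, heq]
      by_cases hAF : ({J ∈ F | I ∩ J = A}).Nonempty
      swap
      · rw [Finset.not_nonempty_iff_eq_empty] at hAF
        simp [hAF]
      have hAcard : s ≤ 2 * A.card := by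
        obtain ⟨J, hJ⟩ := hAF
        simp only [hF, mem_filter, mem_powersetCard_univ] at hJ
        obtain ⟨⟨_, hhalf⟩, hIJ⟩ := hJ
        rw [hIJ] at hhalf
        have : (s : ℝ) ≤ 2 * A.card := by linarith
        exact_mod_cast this
      calc ({J ∈ F | I ∩ J = A}).card
          ≤ ((Finset.univ \ I).powersetCard (s - A.card)).card := hfib
        _ = (N - s).choose (s - A.card) := by rw [card_powersetCard, hcompl]
        _ ≤ (N - s).choose (s / 2) := choose_mono_right_half (by omega) (by omega)
    done
  have h2 : I.powerset.card = 2 ^ s := by rw [card_powerset, hI]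
  rw [h2] at key
  calc (F.card : ℝ) ≤ ((N - s).choose (s / 2) * 2 ^ s : ℕ) := by exact_mod_cast key
    _ = 2 ^ s * ((N - s).choose (s / 2) : ℝ) := by push_cast; ring
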